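/- Let (X, Y) be a bivariate centred Gaussian vector with Var(X) = Var(Y) = 1 and correlation ρ ∈ (-1, 1). Then P(X > 0 and Y > 0) = 1/4 + (1/(2π))·arcsin(ρ). -/

import Mathlib

open MeasureTheory Real Set

private lemma radial_integral : ∫ r in Set.Ioi (0:ℝ), r * Real.exp (-(1/2) * r ^ 2) = 1 := by
  have hderiv : ∀ x ∈ Set.Ioi (0:ℝ), HasDerivAt (fun r : ℝ => -Real.exp (-(1/2) * r ^ 2))
      (x * Real.exp (-(1/2) * x ^ 2)) x := by
    intro x _
    have h := (((hasDerivAt_pow 2 x).const_mul ((-(1/2)) : ℝ)).exp).neg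
    refine h.congr_deriv ?_
    norm_num
    ring
  have htend : Filter.Tendsto (fun r : ℝ => -Real.exp (-(1/2) * r ^ 2))
      Filter.atTop (nhds 0) := by
    have h1 : Filter.Tendsto (fun r : ℝ => (1/2) * r ^ 2) Filter.atTop Filter.atTop :=
      (Filter.tendsto_pow_atTop (two_ne_zero)).const_mul_atTop (by norm_num)
    have h2 := Real.tendsto_exp_neg_atTop_nhds_zero.comp h1
    have h3 : Filter.Tendsto (fun r : ℝ => Real.exp (-(1/2) * r ^ 2))
        Filter.atTop (nhds 0) :=
      h2.congr fun r => by simp only [Function.comp_apply, neg_mul]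
    simpa using h3.neg
  have := MeasureTheory.integral_Ioi_of_hasDerivAt_of_tendsto (a := (0:ℝ))
    (f := fun r : ℝ => -Real.exp (-(1/2) * r ^ 2))
    (Continuous.continuousWithinAt (by continuity)) hderiv
    ((integrable_mul_exp_neg_mul_sq (by norm_num : (0:ℝ) < 1/2)).integrableOn) htend
  rw [this]
  norm_num

private lemma radial_lintegral :
    ∫⁻ r in Set.Ioi (0:ℝ), ENNReal.ofReal (r * Real.exp (-(1/2) * r ^ 2)) = 1 := by
  rw [← ofReal_integral_eq_lintegral_ofReal
      ((integrable_mul_exp_neg_mul_sq (by norm_num : (0:ℝ) < 1/2)).integrableOn) ?_,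
    radial_integral, ENNReal.ofReal_one]
  filter_upwards [ae_restrict_mem measurableSet_Ioi] with r hr
  exact mul_nonneg (le_of_lt hr) (Real.exp_pos _).le

set_option maxHeartbeats 1000000 in
theorem sheppard_orthant (ρ : ℝ) (hρ : -1 < ρ) (hρ' : ρ < 1) :
    (volume.withDensity (fun p : ℝ × ℝ =>
        ENNReal.ofReal ((2 * Real.pi * Real.sqrt (1 - ρ ^ 2))⁻¹ *
          Real.exp (-(p.1 ^ 2 - 2 * ρ * p.1 * p.2 + p.2 ^ 2) / (2 * (1 - ρ ^ 2))))))
      {p : ℝ × ℝ | 0 < p.1 ∧ 0 < p.2}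
    = ENNReal.ofReal (1 / 4 + Real.arcsin ρ / (2 * Real.pi)) := by
  have hπ := Real.pi_pos
  have hρ2 : (0:ℝ) < 1 - ρ ^ 2 := by nlinarith
  set s : ℝ := Real.sqrt (1 - ρ ^ 2) with hs_def
  have hs : 0 < s := Real.sqrt_pos.mpr hρ2
  have hs2 : s ^ 2 = 1 - ρ ^ 2 := Real.sq_sqrt hρ2.le
  set φ : ℝ := Real.arcsin ρ with hφ_def
  have hφ1 : -(π/2) < φ := Real.neg_pi_div_two_lt_arcsin.mpr hρ
  have hφ2 : φ < π/2 := Real.arcsin_lt_pi_div_two.mpr hρ'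
  have hsinφ : Real.sin φ = ρ := Real.sin_arcsin hρ.le hρ'.le
  have hcosφ : Real.cos φ = s := Real.cos_arcsin ρ
  -- the linear shear
  set T : ℝ × ℝ →L[ℝ] ℝ × ℝ := LinearMap.toContinuousLinearMap
    (Matrix.toLin (Module.Basis.finTwoProd ℝ) (Module.Basis.finTwoProd ℝ) !![1, 0; ρ, s]) with hT_def
  have hT_apply : ∀ q : ℝ × ℝ, T q = (q.1, ρ * q.1 + s * q.2) := by
    intro q
    simp only [hT_def, LinearMap.coe_toContinuousLinearMap', Matrix.toLin_finTwoProd_apply]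
    norm_num
  have hT_det : T.det = s := by
    simp only [hT_def, ContinuousLinearMap.det, LinearMap.coe_toContinuousLinearMap,
      LinearMap.det_toLin, Matrix.det_fin_two_of]
    ring
  have hT_inj : Function.Injective T := by
    intro a b hab
    rw [hT_apply, hT_apply, Prod.mk.injEq] at hab
    obtain ⟨h1, h2⟩ := hab
    rw [h1] at h2
    have h3 : s * a.2 = s * b.2 := by linarith
    exact Prod.ext h1 (mul_left_cancel₀ hs.ne' h3)
  -- derivative of polar coordinates
  set B : ℝ × ℝ → (ℝ × ℝ →L[ℝ] ℝ × ℝ) := fun p => LinearMap.toContinuousLinearMap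
    (Matrix.toLin (Module.Basis.finTwoProd ℝ) (Module.Basis.finTwoProd ℝ)
      !![Real.cos p.2, -p.1 * Real.sin p.2; Real.sin p.2, p.1 * Real.cos p.2]) with hB_def
  have hB_det : ∀ p : ℝ × ℝ, (B p).det = p.1 := by
    intro p
    conv_rhs => rw [← one_mul p.1, ← Real.cos_sq_add_sin_sq p.2]
    simp only [hB_def, ContinuousLinearMap.det, LinearMap.coe_toContinuousLinearMap,
      LinearMap.det_toLin, Matrix.det_fin_two_of]
    ring
  set Φ : ℝ × ℝ → ℝ × ℝ := fun p => T (polarCoord.symm p) with hΦ_def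
  have hpcs : ∀ p : ℝ × ℝ, polarCoord.symm p = (p.1 * Real.cos p.2, p.1 * Real.sin p.2) :=
    fun p => rfl
  have hΦ_apply : ∀ p : ℝ × ℝ,
      Φ p = (p.1 * Real.cos p.2, ρ * (p.1 * Real.cos p.2) + s * (p.1 * Real.sin p.2)) := by
    intro p
    simp only [hΦ_def, hpcs, hT_apply]
  have hderiv : ∀ p : ℝ × ℝ, HasFDerivAt Φ (T.comp (B p)) p := fun p =>
    T.hasFDerivAt.comp p (hasFDerivAt_polarCoord_symm p)
  have hdet : ∀ p : ℝ × ℝ, (T.comp (B p)).det = s * p.1 := by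
    intro p
    have h : (T.comp (B p)).det = T.det * (B p).det := by
      simp only [ContinuousLinearMap.det, ContinuousLinearMap.coe_comp, LinearMap.det_comp]
      exact LinearMap.det_comp _ _
    rw [h, hT_det, hB_det]
  -- the rectangle
  set R : Set (ℝ × ℝ) := Set.Ioi (0:ℝ) ×ˢ Set.Ioo (-φ) (π/2) with hR_def
  have hR_meas : MeasurableSet R := measurableSet_Ioi.prod measurableSet_Ioo
  have hR_sub : R ⊆ polarCoord.target := by
    show R ⊆ Set.Ioi (0:ℝ) ×ˢ Set.Ioo (-π) π
    refine Set.prod_mono (le_refl _) (Set.Ioo_subset_Ioo ?_ ?_) <;> linarith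
  have hinj : Set.InjOn Φ R := by
    intro p hp q hq h
    refine polarCoord.symm.injOn ?_ ?_ (hT_inj h)
    · rw [OpenPartialHomeomorph.symm_source]; exact hR_sub hp
    · rw [OpenPartialHomeomorph.symm_source]; exact hR_sub hq
  -- the image identity
  have himg : {p : ℝ × ℝ | 0 < p.1 ∧ 0 < p.2} = Φ '' R := by
    ext ⟨x, y⟩
    simp only [Set.mem_setOf_eq, Set.mem_image]
    constructor
    · rintro ⟨hx, hy⟩
      obtain ⟨z, hzy⟩ : ∃ z : ℝ, ρ * x + s * z = y :=
        ⟨(y - ρ * x) / s, by field_simp; ring⟩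
      obtain ⟨r, hr2, hr⟩ : ∃ r : ℝ, r ^ 2 = x ^ 2 + z ^ 2 ∧ 0 < r := by
        refine ⟨Real.sqrt (x ^ 2 + z ^ 2), Real.sq_sqrt (by positivity), ?_⟩
        apply Real.sqrt_pos.mpr
        positivity
      have hrx : x ≤ r := by nlinarith
      have hzabs : |z| ≤ r := by
        rw [← Real.sqrt_sq_eq_abs, ← Real.sqrt_sq hr.le]
        exact Real.sqrt_le_sqrt (by nlinarith)
      obtain ⟨hz1', hz2'⟩ := abs_le.mp hzabs
      have hz1 : -1 ≤ z / r := by rw [le_div_iff₀ hr]; linarith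
      have hz2 : z / r ≤ 1 := (div_le_one hr).mpr hz2'
      set θ : ℝ := Real.arcsin (z / r) with hθ_def
      have hsinθ : Real.sin θ = z / r := Real.sin_arcsin hz1 hz2
      have hcosθ : Real.cos θ = x / r := by
        rw [hθ_def, Real.cos_arcsin]
        have h1 : 1 - (z / r) ^ 2 = (x / r) ^ 2 := by
          field_simp
          linarith [hr2]
        rw [h1, Real.sqrt_sq (by positivity)]
      have hθmem : θ ∈ Set.Icc (-(π/2)) (π/2) := Real.arcsin_mem_Icc _
      have hθlt : θ < π / 2 := by
        rw [hθ_def]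
        refine Real.arcsin_lt_pi_div_two.mpr ?_
        rw [div_lt_one hr]
        nlinarith
      have hθgt : -φ < θ := by
        by_contra hcon
        push_neg at hcon
        have hsum : Real.sin (θ + φ) = y / r := by
          rw [Real.sin_add, hsinθ, hcosθ, hsinφ, hcosφ]
          rw [div_mul_eq_mul_div, div_mul_eq_mul_div, ← add_div]
          congr 1
          linarith
        have hpos : 0 < Real.sin (θ + φ) := by
          rw [hsum]; positivity
        have hnp : Real.sin (θ + φ) ≤ 0 := by
          apply Real.sin_nonpos_of_nonpos_of_neg_pi_le
          · linarith
          · linarith [hθmem.1]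
        linarith
      refine ⟨(r, θ), ⟨hr, hθgt, hθlt⟩, ?_⟩
      rw [hΦ_apply]
      have hx' : r * Real.cos θ = x := by rw [hcosθ]; field_simp
      have hz' : r * Real.sin θ = z := by rw [hsinθ]; field_simp
      rw [hx', hz', hzy]
    · rintro ⟨⟨r, θ⟩, ⟨hr, hθ⟩, heq⟩
      rw [hΦ_apply, Prod.mk.injEq] at heq
      obtain ⟨rfl, rfl⟩ := heq
      simp only [Set.mem_Ioi] at hr
      simp only [Set.mem_Ioo] at hθ
      have hcos : 0 < Real.cos θ :=
        Real.cos_pos_of_mem_Ioo ⟨by linarith [hθ.1], hθ.2⟩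
      constructor
      · exact mul_pos hr hcos
      · have h : ρ * (r * Real.cos θ) + s * (r * Real.sin θ) = r * Real.sin (θ + φ) := by
          rw [Real.sin_add, hsinφ, hcosφ]; ring
        rw [h]
        exact mul_pos hr (Real.sin_pos_of_pos_of_lt_pi (by linarith [hθ.1]) (by linarith [hθ.2]))
  -- the main computation
  have hSmeas : MeasurableSet {p : ℝ × ℝ | 0 < p.1 ∧ 0 < p.2} :=
    (measurableSet_lt measurable_const measurable_fst).inter
      (measurableSet_lt measurable_const measurable_snd)
  rw [withDensity_apply _ hSmeas, himg,
    lintegral_image_eq_lintegral_abs_det_fderiv_mul volume hR_meas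
      (fun p _ => (hderiv p).hasFDerivWithinAt) hinj]
  have hcongr : ∀ p ∈ R,
      ENNReal.ofReal |(T.comp (B p)).det| *
        ENNReal.ofReal ((2 * Real.pi * s)⁻¹ *
          Real.exp (-((Φ p).1 ^ 2 - 2 * ρ * (Φ p).1 * (Φ p).2 + (Φ p).2 ^ 2) / (2 * (1 - ρ ^ 2))))
      = ENNReal.ofReal ((2 * Real.pi)⁻¹ * (p.1 * Real.exp (-(1/2) * p.1 ^ 2))) := by
    rintro ⟨r, θ⟩ ⟨hr, hθ⟩
    simp only [Set.mem_Ioi] at hr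
    rw [hdet, abs_of_pos (by positivity), hΦ_apply]
    have hpyth : Real.cos θ ^ 2 + Real.sin θ ^ 2 = 1 := Real.cos_sq_add_sin_sq θ
    have hquad : ((r, θ).1 * Real.cos (r, θ).2) ^ 2
        - 2 * ρ * ((r, θ).1 * Real.cos (r, θ).2) *
          (ρ * ((r, θ).1 * Real.cos (r, θ).2) + s * ((r, θ).1 * Real.sin (r, θ).2))
        + (ρ * ((r, θ).1 * Real.cos (r, θ).2) + s * ((r, θ).1 * Real.sin (r, θ).2)) ^ 2
        = (1 - ρ ^ 2) * r ^ 2 := by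
      simp only
      linear_combination (r * Real.sin θ) ^ 2 * hs2 + ((1 - ρ ^ 2) * r ^ 2) * hpyth
    rw [hquad]
    have hexp : -((1 - ρ ^ 2) * r ^ 2) / (2 * (1 - ρ ^ 2)) = -(1/2) * r ^ 2 := by
      field_simp
    rw [hexp, ← ENNReal.ofReal_mul (by positivity)]
    congr 1
    simp only
    field_simp
  rw [setLIntegral_congr_fun hR_meas hcongr]
  -- now factor the product integral
  have hmeasF : Measurable fun p : ℝ × ℝ =>
      ENNReal.ofReal ((2 * Real.pi)⁻¹ * (p.1 * Real.exp (-(1/2) * p.1 ^ 2))) := by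
    apply ENNReal.measurable_ofReal.comp
    fun_prop
  rw [hR_def, Measure.volume_eq_prod, ← Measure.prod_restrict,
    lintegral_prod _ hmeasF.aemeasurable]
  simp only [lintegral_const, Measure.restrict_apply MeasurableSet.univ, Set.univ_inter,
    Real.volume_Ioo]
  rw [lintegral_mul_const _ (by fun_prop)]
  simp_rw [ENNReal.ofReal_mul (by positivity : (0:ℝ) ≤ (2 * Real.pi)⁻¹)]
  rw [lintegral_const_mul _ (by fun_prop), radial_lintegral, mul_one,
    ← ENNReal.ofReal_mul (by positivity)]
  congr 1
  rw [hφ_def]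
  field_simp
  ring
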